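/- Let a, b, c : ℝ² → ℝ be C¹ functions, let ℜ be a Riemann function for the hyperbolic operator H, let s : ℝ → ℝ be a C¹ strictly decreasing bijection with graph Γ = {(x, s(x)) : x ∈ ℝ}, and let u : ℝ² → ℝ be a C² solution of Hu = u_{xy} + a uₓ + b u_y + c u = 0 on ℝ² which in addition vanishes on Γ, i.e. u(x, s(x)) = 0 for all x ∈ ℝ. Then for every point P = (x₀, y₀) ∈ ℝ², u(x₀, y₀) = ½ ∫_{s⁻¹(y₀)}^{x₀} ℜ(x, s(x); x₀, y₀) · [uₓ(x, s(x)) − u_y(x, s(x)) · s′(x)] dx. -/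

import Mathlib

/-- Partial derivative with respect to the first variable. -/
noncomputable def pdx (u : ℝ × ℝ → ℝ) (p : ℝ × ℝ) : ℝ :=
  deriv (fun x : ℝ => u (x, p.2)) p.1

/-- Partial derivative with respect to the second variable. -/
noncomputable def pdy (u : ℝ × ℝ → ℝ) (p : ℝ × ℝ) : ℝ :=
  deriv (fun y : ℝ => u (p.1, y)) p.2

namespace RiemannAux
open MeasureTheory intervalIntegral Metric Set

lemma diffAt_secx {f : ℝ × ℝ → ℝ} (hf : Differentiable ℝ f) (q : ℝ × ℝ) :
    DifferentiableAt ℝ (fun x : ℝ => f (x, q.2)) q.1 := by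
  have hline : DifferentiableAt ℝ (fun x : ℝ => ((x : ℝ), q.2)) q.1 :=
    differentiableAt_id.prodMk (differentiableAt_const _)
  exact (hf (q.1, q.2)).comp q.1 hline

lemma diffAt_secy {f : ℝ × ℝ → ℝ} (hf : Differentiable ℝ f) (q : ℝ × ℝ) :
    DifferentiableAt ℝ (fun y : ℝ => f (q.1, y)) q.2 := by
  have hline : DifferentiableAt ℝ (fun y : ℝ => (q.1, (y : ℝ))) q.2 :=
    (differentiableAt_const _).prodMk differentiableAt_id
  exact (hf (q.1, q.2)).comp q.2 hline

lemma hasDerivAt_secx {f : ℝ × ℝ → ℝ} (hf : Differentiable ℝ f) (q : ℝ × ℝ) :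
    HasDerivAt (fun x : ℝ => f (x, q.2)) (pdx f q) q.1 :=
  (diffAt_secx hf q).hasDerivAt

lemma hasDerivAt_secy {f : ℝ × ℝ → ℝ} (hf : Differentiable ℝ f) (q : ℝ × ℝ) :
    HasDerivAt (fun y : ℝ => f (q.1, y)) (pdy f q) q.2 :=
  (diffAt_secy hf q).hasDerivAt

lemma pdx_eq_fderiv {f : ℝ × ℝ → ℝ} {p : ℝ × ℝ} (hf : DifferentiableAt ℝ f p) :
    pdx f p = fderiv ℝ f p (1, 0) := by
  have h1 : HasDerivAt (fun x : ℝ => ((x : ℝ), p.2)) ((1 : ℝ), (0 : ℝ)) p.1 :=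
    (hasDerivAt_id p.1).prodMk (hasDerivAt_const _ _)
  have h2 : HasFDerivAt f (fderiv ℝ f p) p := hf.hasFDerivAt
  have h3 : HasDerivAt (fun x : ℝ => f (x, p.2)) (fderiv ℝ f p (1, 0)) p.1 := by
    have := h2.comp_hasDerivAt p.1 h1
    exact this
  exact h3.deriv

lemma pdy_eq_fderiv {f : ℝ × ℝ → ℝ} {p : ℝ × ℝ} (hf : DifferentiableAt ℝ f p) :
    pdy f p = fderiv ℝ f p (0, 1) := by
  have h1 : HasDerivAt (fun y : ℝ => (p.1, (y : ℝ))) ((0 : ℝ), (1 : ℝ)) p.2 :=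
    (hasDerivAt_const _ _).prodMk (hasDerivAt_id p.2)
  have h3 : HasDerivAt (fun y : ℝ => f (p.1, y)) (fderiv ℝ f p (0, 1)) p.2 := by
    have := hf.hasFDerivAt.comp_hasDerivAt p.2 h1
    exact this
  exact h3.deriv

lemma contDiff_pdx {f : ℝ × ℝ → ℝ} {n : ℕ∞} (hf : ContDiff ℝ (n + 1) f) :
    ContDiff ℝ n (pdx f) := by
  have hdiff : Differentiable ℝ f := hf.differentiable (by simp)
  have h : pdx f = fun p => fderiv ℝ f p (1, 0) := funext fun p => pdx_eq_fderiv (hdiff p)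
  rw [h]
  exact (hf.fderiv_right le_rfl).clm_apply contDiff_const

lemma contDiff_pdy {f : ℝ × ℝ → ℝ} {n : ℕ∞} (hf : ContDiff ℝ (n + 1) f) :
    ContDiff ℝ n (pdy f) := by
  have hdiff : Differentiable ℝ f := hf.differentiable (by simp)
  have h : pdy f = fun p => fderiv ℝ f p (0, 1) := funext fun p => pdy_eq_fderiv (hdiff p)
  rw [h]
  exact (hf.fderiv_right le_rfl).clm_apply contDiff_const

lemma continuous_pdx {f : ℝ × ℝ → ℝ} (hf : ContDiff ℝ 1 f) : Continuous (pdx f) := by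
  have : ContDiff ℝ (0 + 1) f := by exact_mod_cast hf
  exact (contDiff_pdx this).continuous

lemma continuous_pdy {f : ℝ × ℝ → ℝ} (hf : ContDiff ℝ 1 f) : Continuous (pdy f) := by
  have : ContDiff ℝ (0 + 1) f := by exact_mod_cast hf
  exact (contDiff_pdy this).continuous

lemma pdx_pdy_comm {f : ℝ × ℝ → ℝ} (hf : ContDiff ℝ 2 f) (q : ℝ × ℝ) :
    pdx (pdy f) q = pdy (pdx f) q := by
  have hdiff : Differentiable ℝ f := hf.differentiable two_ne_zero
  have hf' : ContDiff ℝ 1 (fderiv ℝ f) := hf.fderiv_right (by norm_num)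
  have hd' : Differentiable ℝ (fderiv ℝ f) := hf'.differentiable one_ne_zero
  have h1 : pdy f = fun p => fderiv ℝ f p (0, 1) := funext fun p => pdy_eq_fderiv (hdiff p)
  have h2 : pdx f = fun p => fderiv ℝ f p (1, 0) := funext fun p => pdx_eq_fderiv (hdiff p)
  have d1 : DifferentiableAt ℝ (fun p => fderiv ℝ f p ((0 : ℝ), (1 : ℝ))) q :=
    (hd' q).clm_apply (differentiableAt_const _)
  have d2 : DifferentiableAt ℝ (fun p => fderiv ℝ f p ((1 : ℝ), (0 : ℝ))) q :=
    (hd' q).clm_apply (differentiableAt_const _)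
  rw [h1, h2, pdx_eq_fderiv d1, pdy_eq_fderiv d2]
  rw [fderiv_clm_apply (hd' q) (differentiableAt_const _),
      fderiv_clm_apply (hd' q) (differentiableAt_const _)]
  simp only [fderiv_const, fderiv_const_apply, Pi.zero_apply, ContinuousLinearMap.comp_zero,
    ContinuousLinearMap.add_apply, ContinuousLinearMap.zero_apply,
    ContinuousLinearMap.flip_apply, zero_add]
  exact second_derivative_symmetric (fun y => (hdiff y).hasFDerivAt)
    ((hd' q).hasFDerivAt) _ _

/-- The function `(x, t) ↦ ∫ y in c..t, V (x, y)` has a full derivative at `(z, c)`,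
namely `(h, k) ↦ V (z, c) * k`. -/
lemma hasFDerivAt_parametric_primitive (V : ℝ × ℝ → ℝ) (hV : Continuous V) (z c : ℝ) :
    HasFDerivAt (fun p : ℝ × ℝ => ∫ y in c..p.2, V (p.1, y))
      (V (z, c) • ContinuousLinearMap.snd ℝ ℝ ℝ) (z, c) := by
  rw [hasFDerivAt_iff_isLittleO, Asymptotics.isLittleO_iff]
  intro ε hε
  obtain ⟨δ, hδpos, hδ⟩ := Metric.continuousAt_iff.1 (hV.continuousAt (x := (z, c))) ε hε
  filter_upwards [Metric.ball_mem_nhds (z, c) hδpos] with p hp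
  have hp1 : dist p.1 z < δ := lt_of_le_of_lt (by rw [Prod.dist_eq]; exact le_max_left _ _) hp
  have hp2 : dist p.2 c < δ := lt_of_le_of_lt (by rw [Prod.dist_eq]; exact le_max_right _ _) hp
  have key : (∫ y in c..p.2, V (p.1, y)) - (∫ y in c..(z, c).2, V ((z, c).1, y))
      - (V (z, c) • ContinuousLinearMap.snd ℝ ℝ ℝ) (p - (z, c))
      = ∫ y in c..p.2, (V (p.1, y) - V (z, c)) := by
    have h1 : (∫ y in c..(z, c).2, V ((z, c).1, y)) = 0 := by simp
    have h2 : (V (z, c) • ContinuousLinearMap.snd ℝ ℝ ℝ) (p - (z, c))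
        = V (z, c) * (p.2 - c) := by
      simp [ContinuousLinearMap.smul_apply, smul_eq_mul]
    have hcont : Continuous (fun y : ℝ => V (p.1, y)) :=
      hV.comp (continuous_const.prodMk continuous_id)
    rw [h1, h2, intervalIntegral.integral_sub (hcont.intervalIntegrable _ _)
      intervalIntegrable_const]
    simp [intervalIntegral.integral_const, mul_comm, smul_eq_mul]
  rw [key]
  have hbound : ∀ y ∈ Set.uIoc c p.2, ‖V (p.1, y) - V (z, c)‖ ≤ ε := by
    intro y hy
    have hyc : dist y c < δ := by
      have h1 : dist c y ≤ dist c p.2 := Real.dist_left_le_of_mem_uIcc (uIoc_subset_uIcc hy)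
      rw [dist_comm y c]
      calc dist c y ≤ dist c p.2 := h1
        _ = dist p.2 c := dist_comm _ _
        _ < δ := hp2
    have : dist (p.1, y) (z, c) < δ := by
      rw [Prod.dist_eq]
      exact max_lt hp1 hyc
    exact le_of_lt (by simpa [Real.dist_eq] using hδ this)
  calc ‖∫ y in c..p.2, (V (p.1, y) - V (z, c))‖
      ≤ ε * |p.2 - c| := intervalIntegral.norm_integral_le_of_norm_le_const hbound
    _ ≤ ε * ‖p - (z, c)‖ := by
        apply mul_le_mul_of_nonneg_left _ hε.le
        have := norm_snd_le (p - (z, c))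
        simpa [Real.norm_eq_abs] using this


lemma leibniz {V : ℝ × ℝ → ℝ} (hV : ContDiff ℝ 1 V) {s : ℝ → ℝ} (hs : ContDiff ℝ 1 s)
    (y₀ z : ℝ) :
    HasDerivAt (fun x => ∫ y in s x..y₀, V (x, y))
      ((∫ y in s z..y₀, pdx V (z, y)) - V (z, s z) * deriv s z) z := by
  have hVc : Continuous V := hV.continuous
  have hVd : Differentiable ℝ V := hV.differentiable one_ne_zero
  have hpdxc : Continuous (pdx V) := continuous_pdx hV
  have hsd : HasDerivAt s (deriv s z) z := ((hs.differentiable one_ne_zero) z).hasDerivAt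
  -- Part A : fixed limits, moving parameter
  have hA : HasDerivAt (fun x => ∫ y in s z..y₀, V (x, y))
      (∫ y in s z..y₀, pdx V (z, y)) z := by
    have hK : IsCompact ((Icc (z - 1) (z + 1)) ×ˢ uIcc (s z) y₀) :=
      isCompact_Icc.prod isCompact_uIcc
    obtain ⟨C, hC⟩ := hK.exists_bound_of_continuousOn hpdxc.continuousOn
    have main := intervalIntegral.hasDerivAt_integral_of_dominated_loc_of_deriv_le
      (F := fun x y => V (x, y)) (F' := fun x y => pdx V (x, y)) (x₀ := z)
      (a := s z) (b := y₀) (bound := fun _ => C) (μ := MeasureTheory.volume)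
      (Metric.ball_mem_nhds z one_pos) ?_ ?_ ?_ ?_ ?_ ?_
    · exact main.2
    · exact Filter.Eventually.of_forall fun x =>
        (hVc.comp (continuous_const.prodMk continuous_id)).aestronglyMeasurable
    · exact (hVc.comp (continuous_const.prodMk continuous_id)).intervalIntegrable _ _
    · exact (hpdxc.comp (continuous_const.prodMk continuous_id)).aestronglyMeasurable
    · refine MeasureTheory.ae_of_all _ fun y hy x hx => ?_
      refine hC (x, y) ⟨?_, uIoc_subset_uIcc hy⟩
      have : |x - z| < 1 := by simpa [Real.dist_eq] using hx
      constructor <;> [linarith [abs_sub_lt_iff.1 this]; linarith [abs_sub_lt_iff.1 this]]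
    · exact intervalIntegrable_const
    · exact MeasureTheory.ae_of_all _ fun y hy x hx => hasDerivAt_secx hVd (x, y)
  -- Part B : moving limit
  have hB : HasDerivAt (fun x => ∫ y in s z..s x, V (x, y))
      (V (z, s z) * deriv s z) z := by
    have hH := hasFDerivAt_parametric_primitive V hVc z (s z)
    have hline : HasDerivAt (fun x : ℝ => ((x : ℝ), s x)) ((1 : ℝ), deriv s z) z :=
      (hasDerivAt_id z).prodMk hsd
    have hcomp := hH.comp_hasDerivAt z hline
    simpa [Function.comp_def] using hcomp
  -- combine
  have hsplit : (fun x => ∫ y in s x..y₀, V (x, y))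
      = fun x => (∫ y in s z..y₀, V (x, y)) - (∫ y in s z..s x, V (x, y)) := by
    funext x
    have hcont : Continuous (fun y : ℝ => V (x, y)) :=
      hVc.comp (continuous_const.prodMk continuous_id)
    have hadd := intervalIntegral.integral_add_adjacent_intervals (μ := MeasureTheory.volume)
      (hcont.intervalIntegrable (s z) (s x)) (hcont.intervalIntegrable (s x) y₀)
    linarith [hadd]
  rw [hsplit]
  exact hA.sub hB


lemma contDiff_one_pdx {f : ℝ × ℝ → ℝ} (hf : ContDiff ℝ 2 f) : ContDiff ℝ 1 (pdx f) := by
  refine contDiff_pdx ?_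
  exact_mod_cast hf

lemma contDiff_one_pdy {f : ℝ × ℝ → ℝ} (hf : ContDiff ℝ 2 f) : ContDiff ℝ 1 (pdy f) := by
  refine contDiff_pdy ?_
  exact_mod_cast hf

/-- The divergence identity `∂ₓ V + ∂_y W = 0` for the Riemann method. -/
lemma divergence_identity (a b c : ℝ × ℝ → ℝ)
    (ha : ContDiff ℝ 1 a) (hb : ContDiff ℝ 1 b)
    (Rp : ℝ × ℝ → ℝ) (hRp : ContDiff ℝ 2 Rp)
    (hadj : ∀ q : ℝ × ℝ, pdy (pdx Rp) q - pdx (fun q' => a q' * Rp q') q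
      - pdy (fun q' => b q' * Rp q') q + c q * Rp q = 0)
    (u : ℝ × ℝ → ℝ) (hu : ContDiff ℝ 2 u)
    (hueq : ∀ q : ℝ × ℝ,
      pdy (pdx u) q + a q * pdx u q + b q * pdy u q + c q * u q = 0)
    (q : ℝ × ℝ) :
    pdx (fun p => (1/2) * (Rp p * pdy u p - u p * pdy Rp p) + a p * (u p * Rp p)) q
      + pdy (fun p => (1/2) * (Rp p * pdx u p - u p * pdx Rp p) + b p * (u p * Rp p)) q
      = 0 := by
  have hud : Differentiable ℝ u := hu.differentiable two_ne_zero
  have hRpd : Differentiable ℝ Rp := hRp.differentiable two_ne_zero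
  have hpuy : Differentiable ℝ (pdy u) := (contDiff_one_pdy hu).differentiable one_ne_zero
  have hpux : Differentiable ℝ (pdx u) := (contDiff_one_pdx hu).differentiable one_ne_zero
  have hpRy : Differentiable ℝ (pdy Rp) := (contDiff_one_pdy hRp).differentiable one_ne_zero
  have hpRx : Differentiable ℝ (pdx Rp) := (contDiff_one_pdx hRp).differentiable one_ne_zero
  have had : Differentiable ℝ a := ha.differentiable one_ne_zero
  have hbd : Differentiable ℝ b := hb.differentiable one_ne_zero
  -- sections in the x-direction
  have hR_x := hasDerivAt_secx hRpd q
  have hu_x := hasDerivAt_secx hud q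
  have hpuy_x := hasDerivAt_secx hpuy q
  have hpRy_x := hasDerivAt_secx hpRy q
  have ha_x := hasDerivAt_secx had q
  -- sections in the y-direction
  have hR_y := hasDerivAt_secy hRpd q
  have hu_y := hasDerivAt_secy hud q
  have hpux_y := hasDerivAt_secy hpux q
  have hpRx_y := hasDerivAt_secy hpRx q
  have hb_y := hasDerivAt_secy hbd q
  have e1 : pdx (fun p => (1/2) * (Rp p * pdy u p - u p * pdy Rp p) + a p * (u p * Rp p)) q
      = (1/2) * ((pdx Rp q * pdy u q + Rp q * pdx (pdy u) q)
          - (pdx u q * pdy Rp q + u q * pdx (pdy Rp) q))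
        + (pdx a q * (u q * Rp q) + a q * (pdx u q * Rp q + u q * pdx Rp q)) :=
    HasDerivAt.deriv ((((hR_x.mul hpuy_x).sub (hu_x.mul hpRy_x)).const_mul _).add
      (ha_x.mul (hu_x.mul hR_x)))
  have e2 : pdy (fun p => (1/2) * (Rp p * pdx u p - u p * pdx Rp p) + b p * (u p * Rp p)) q
      = (1/2) * ((pdy Rp q * pdx u q + Rp q * pdy (pdx u) q)
          - (pdy u q * pdx Rp q + u q * pdy (pdx Rp) q))
        + (pdy b q * (u q * Rp q) + b q * (pdy u q * Rp q + u q * pdy Rp q)) :=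
    HasDerivAt.deriv ((((hR_y.mul hpux_y).sub (hu_y.mul hpRx_y)).const_mul _).add
      (hb_y.mul (hu_y.mul hR_y)))
  have hax : pdx (fun q' => a q' * Rp q') q = pdx a q * Rp q + a q * pdx Rp q :=
    (ha_x.mul hR_x).deriv
  have hby : pdy (fun q' => b q' * Rp q') q = pdy b q * Rp q + b q * pdy Rp q :=
    (hb_y.mul hR_y).deriv
  have hadj' := hadj q
  rw [hax, hby] at hadj'
  rw [e1, e2, pdx_pdy_comm hu q, pdx_pdy_comm hRp q]
  linear_combination Rp q * hueq q - u q * hadj'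


lemma main_aux (a b c : ℝ × ℝ → ℝ)
    (ha : ContDiff ℝ 1 a) (hb : ContDiff ℝ 1 b)
    (Rp : ℝ × ℝ → ℝ) (hRp : ContDiff ℝ 2 Rp)
    (hadj : ∀ q : ℝ × ℝ, pdy (pdx Rp) q - pdx (fun q' => a q' * Rp q') q
      - pdy (fun q' => b q' * Rp q') q + c q * Rp q = 0)
    (x₀ y₀ : ℝ)
    (hvert : ∀ y : ℝ, Rp (x₀, y) = Real.exp (∫ τ in y₀..y, a (x₀, τ)))
    (hhoriz : ∀ x : ℝ, Rp (x, y₀) = Real.exp (∫ t in x₀..x, b (t, y₀)))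
    (s : ℝ → ℝ) (hs : ContDiff ℝ 1 s)
    (x₁ : ℝ) (hsx₁ : s x₁ = y₀)
    (u : ℝ × ℝ → ℝ) (hu : ContDiff ℝ 2 u)
    (hueq : ∀ q : ℝ × ℝ, pdy (pdx u) q + a q * pdx u q + b q * pdy u q + c q * u q = 0)
    (huΓ : ∀ x : ℝ, u (x, s x) = 0) :
    u (x₀, y₀) = (1/2) * ∫ x in x₁..x₀,
      Rp (x, s x) * (pdx u (x, s x) - pdy u (x, s x) * deriv s x) := by
  have hud : Differentiable ℝ u := hu.differentiable two_ne_zero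
  have hRpd : Differentiable ℝ Rp := hRp.differentiable two_ne_zero
  have hsc : Continuous s := hs.continuous
  have hsderiv : Continuous (deriv s) := hs.continuous_deriv le_rfl
  set V : ℝ × ℝ → ℝ :=
    fun p => (1/2) * (Rp p * pdy u p - u p * pdy Rp p) + a p * (u p * Rp p) with hVdef
  set W : ℝ × ℝ → ℝ :=
    fun p => (1/2) * (Rp p * pdx u p - u p * pdx Rp p) + b p * (u p * Rp p) with hWdef
  have hV1 : ContDiff ℝ 1 V := by
    refine ContDiff.add ?_ (ha.mul ((hu.of_le one_le_two).mul (hRp.of_le one_le_two)))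
    exact contDiff_const.mul (((hRp.of_le one_le_two).mul (contDiff_one_pdy hu)).sub
      ((hu.of_le one_le_two).mul (contDiff_one_pdy hRp)))
  have hW1 : ContDiff ℝ 1 W := by
    refine ContDiff.add ?_ (hb.mul ((hu.of_le one_le_two).mul (hRp.of_le one_le_two)))
    exact contDiff_const.mul (((hRp.of_le one_le_two).mul (contDiff_one_pdx hu)).sub
      ((hu.of_le one_le_two).mul (contDiff_one_pdx hRp)))
  have hVc : Continuous V := hV1.continuous
  have hWc : Continuous W := hW1.continuous
  -- Goursat data differentiated
  have haline : Continuous (fun τ : ℝ => a (x₀, τ)) :=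
    ha.continuous.comp (continuous_const.prodMk continuous_id)
  have hbline : Continuous (fun t : ℝ => b (t, y₀)) :=
    hb.continuous.comp (continuous_id.prodMk continuous_const)
  have hRpvert : ∀ y : ℝ, pdy Rp (x₀, y) = a (x₀, y) * Rp (x₀, y) := by
    intro y
    have hsec : (fun t : ℝ => Rp (x₀, t)) = fun t => Real.exp (∫ τ in y₀..t, a (x₀, τ)) :=
      funext fun t => hvert t
    have hI : HasDerivAt (fun t : ℝ => ∫ τ in y₀..t, a (x₀, τ)) (a (x₀, y)) y :=
      (haline.integral_hasStrictDerivAt y₀ y).hasDerivAt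
    have hE := hI.exp
    have h0 : pdy Rp (x₀, y) = deriv (fun t => Rp (x₀, t)) y := rfl
    rw [h0, hsec, hE.deriv, ← hvert y]
    ring
  have hRphoriz : ∀ x : ℝ, pdx Rp (x, y₀) = b (x, y₀) * Rp (x, y₀) := by
    intro x
    have hsec : (fun t : ℝ => Rp (t, y₀)) = fun t => Real.exp (∫ τ in x₀..t, b (τ, y₀)) :=
      funext fun t => hhoriz t
    have hI : HasDerivAt (fun t : ℝ => ∫ τ in x₀..t, b (τ, y₀)) (b (x, y₀)) x :=
      (hbline.integral_hasStrictDerivAt x₀ x).hasDerivAt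
    have hE := hI.exp
    have h0 : pdx Rp (x, y₀) = deriv (fun t => Rp (t, y₀)) x := rfl
    rw [h0, hsec, hE.deriv, ← hhoriz x]
    ring
  have hR00 : Rp (x₀, y₀) = 1 := by rw [hvert y₀]; simp
  -- the integral of V over the right vertical edge
  have hprodiff_y : ∀ y : ℝ, HasDerivAt (fun t => u (x₀, t) * Rp (x₀, t))
      (pdy u (x₀, y) * Rp (x₀, y) + u (x₀, y) * pdy Rp (x₀, y)) y :=
    fun y => (hasDerivAt_secy hud (x₀, y)).mul (hasDerivAt_secy hRpd (x₀, y))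
  have hΨx₀ : (∫ y in s x₀..y₀, V (x₀, y)) = (1/2) * u (x₀, y₀) := by
    have hVl : ∀ y : ℝ, V (x₀, y)
        = (1/2) * (pdy u (x₀, y) * Rp (x₀, y) + u (x₀, y) * pdy Rp (x₀, y)) := by
      intro y
      simp only [hVdef]
      rw [hRpvert y]
      ring
    have hstep : (∫ y in s x₀..y₀, V (x₀, y))
        = ∫ y in s x₀..y₀, (1/2) * deriv (fun t => u (x₀, t) * Rp (x₀, t)) y := by
      apply intervalIntegral.integral_congr
      intro y _
      dsimp only
      rw [hVl y, (hprodiff_y y).deriv]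
    rw [hstep, intervalIntegral.integral_const_mul]
    have hcontd : Continuous (fun y => deriv (fun t => u (x₀, t) * Rp (x₀, t)) y) := by
      have heq : (fun y => deriv (fun t => u (x₀, t) * Rp (x₀, t)) y)
          = fun y => pdy u (x₀, y) * Rp (x₀, y) + u (x₀, y) * pdy Rp (x₀, y) :=
        funext fun y => (hprodiff_y y).deriv
      rw [heq]
      have l1 : Continuous (fun y : ℝ => ((x₀ : ℝ), y)) := continuous_const.prodMk continuous_id
      exact (((continuous_pdy (hu.of_le one_le_two)).comp l1).mul (hRp.continuous.comp l1)).add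
        ((hu.continuous.comp l1).mul ((continuous_pdy (hRp.of_le one_le_two)).comp l1))
    have hder : (∫ y in s x₀..y₀, deriv (fun t => u (x₀, t) * Rp (x₀, t)) y)
        = u (x₀, y₀) * Rp (x₀, y₀) - u (x₀, s x₀) * Rp (x₀, s x₀) := by
      apply intervalIntegral.integral_deriv_eq_sub
      · intro y _
        exact ((hasDerivAt_secy hud (x₀, y)).mul (hasDerivAt_secy hRpd (x₀, y))).differentiableAt
      · exact hcontd.intervalIntegrable _ _
    rw [hder, hR00, huΓ x₀]
    ring
  -- the integral of W over the top horizontal edge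
  have hprodiff_x : ∀ x : ℝ, HasDerivAt (fun t => u (t, y₀) * Rp (t, y₀))
      (pdx u (x, y₀) * Rp (x, y₀) + u (x, y₀) * pdx Rp (x, y₀)) x :=
    fun x => (hasDerivAt_secx hud (x, y₀)).mul (hasDerivAt_secx hRpd (x, y₀))
  have hWy₀ : (∫ x in x₁..x₀, W (x, y₀)) = (1/2) * u (x₀, y₀) := by
    have hWl : ∀ x : ℝ, W (x, y₀)
        = (1/2) * (pdx u (x, y₀) * Rp (x, y₀) + u (x, y₀) * pdx Rp (x, y₀)) := by
      intro x
      simp only [hWdef]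
      rw [hRphoriz x]
      ring
    have hstep : (∫ x in x₁..x₀, W (x, y₀))
        = ∫ x in x₁..x₀, (1/2) * deriv (fun t => u (t, y₀) * Rp (t, y₀)) x := by
      apply intervalIntegral.integral_congr
      intro x _
      dsimp only
      rw [hWl x, (hprodiff_x x).deriv]
    rw [hstep, intervalIntegral.integral_const_mul]
    have hcontd : Continuous (fun x => deriv (fun t => u (t, y₀) * Rp (t, y₀)) x) := by
      have heq : (fun x => deriv (fun t => u (t, y₀) * Rp (t, y₀)) x)
          = fun x => pdx u (x, y₀) * Rp (x, y₀) + u (x, y₀) * pdx Rp (x, y₀) :=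
        funext fun x => (hprodiff_x x).deriv
      rw [heq]
      have l1 : Continuous (fun x : ℝ => ((x : ℝ), y₀)) := continuous_id.prodMk continuous_const
      exact (((continuous_pdx (hu.of_le one_le_two)).comp l1).mul (hRp.continuous.comp l1)).add
        ((hu.continuous.comp l1).mul ((continuous_pdx (hRp.of_le one_le_two)).comp l1))
    have hder : (∫ x in x₁..x₀, deriv (fun t => u (t, y₀) * Rp (t, y₀)) x)
        = u (x₀, y₀) * Rp (x₀, y₀) - u (x₁, y₀) * Rp (x₁, y₀) := by
      apply intervalIntegral.integral_deriv_eq_sub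
      · intro x _
        exact ((hasDerivAt_secx hud (x, y₀)).mul (hasDerivAt_secx hRpd (x, y₀))).differentiableAt
      · exact hcontd.intervalIntegrable _ _
    have hu₁ : u (x₁, y₀) = 0 := by rw [← hsx₁]; exact huΓ x₁
    rw [hder, hR00, hu₁]
    ring
  -- the divergence identity
  have hid : ∀ q : ℝ × ℝ, pdx V q + pdy W q = 0 := by
    intro q
    rw [hVdef, hWdef]
    exact divergence_identity a b c ha hb Rp hRp hadj u hu hueq q
  -- the key derivative of Ψ
  have hkey : ∀ z : ℝ, HasDerivAt (fun x => ∫ y in s x..y₀, V (x, y))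
      ((W (z, s z) - W (z, y₀)) - V (z, s z) * deriv s z) z := by
    intro z
    have h := leibniz hV1 hs y₀ z
    have hWsec : Continuous (fun y : ℝ => pdy W (z, y)) :=
      (continuous_pdy hW1).comp (continuous_const.prodMk continuous_id)
    have hd2 : (∫ y in s z..y₀, deriv (fun t => W (z, t)) y) = W (z, y₀) - W (z, s z) :=
      intervalIntegral.integral_deriv_eq_sub
        (fun y _ => diffAt_secy (hW1.differentiable one_ne_zero) (z, y))
        (hWsec.intervalIntegrable _ _)
    have hxint : (∫ y in s z..y₀, pdx V (z, y)) = W (z, s z) - W (z, y₀) := by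
      have h1 : (∫ y in s z..y₀, pdx V (z, y)) = ∫ y in s z..y₀, -pdy W (z, y) := by
        apply intervalIntegral.integral_congr
        intro y _
        dsimp only
        have := hid (z, y)
        linarith
      have h2 : (∫ y in s z..y₀, pdy W (z, y)) = W (z, y₀) - W (z, s z) := hd2
      rw [h1, intervalIntegral.integral_neg, h2]
      ring
    rw [hxint] at h
    exact h
  -- fundamental theorem of calculus
  have l1 : Continuous fun z : ℝ => ((z : ℝ), s z) := continuous_id.prodMk hsc
  have l2 : Continuous fun z : ℝ => ((z : ℝ), y₀) := continuous_id.prodMk continuous_const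
  have hDcont : Continuous (fun z => (W (z, s z) - W (z, y₀)) - V (z, s z) * deriv s z) :=
    ((hWc.comp l1).sub (hWc.comp l2)).sub ((hVc.comp l1).mul hsderiv)
  have hFTC := intervalIntegral.integral_eq_sub_of_hasDerivAt (a := x₁) (b := x₀)
    (fun x _ => hkey x) (hDcont.intervalIntegrable x₁ x₀)
  have hΨx₁ : (∫ y in s x₁..y₀, V (x₁, y)) = 0 := by rw [hsx₁]; simp
  have hint1 : IntervalIntegrable (fun z => W (z, s z) - V (z, s z) * deriv s z)
      MeasureTheory.volume x₁ x₀ :=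
    ((hWc.comp l1).sub ((hVc.comp l1).mul hsderiv)).intervalIntegrable _ _
  have hint2 : IntervalIntegrable (fun z => W (z, y₀)) MeasureTheory.volume x₁ x₀ :=
    (hWc.comp l2).intervalIntegrable _ _
  have hsplit : (∫ z in x₁..x₀, ((W (z, s z) - W (z, y₀)) - V (z, s z) * deriv s z))
      = (∫ z in x₁..x₀, (W (z, s z) - V (z, s z) * deriv s z))
        - ∫ z in x₁..x₀, W (z, y₀) := by
    rw [← intervalIntegral.integral_sub hint1 hint2]
    apply intervalIntegral.integral_congr
    intro z _
    dsimp only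
    ring
  have hΓint : (∫ z in x₁..x₀, (W (z, s z) - V (z, s z) * deriv s z))
      = (1/2) * ∫ x in x₁..x₀,
        Rp (x, s x) * (pdx u (x, s x) - pdy u (x, s x) * deriv s x) := by
    rw [← intervalIntegral.integral_const_mul]
    apply intervalIntegral.integral_congr
    intro z _
    simp only [hVdef, hWdef]
    rw [huΓ z]
    ring
  rw [hsplit, hΓint, hWy₀, hΨx₀, hΨx₁] at hFTC
  linarith

end RiemannAux

/-- Riemann's representation formula for a solution of the hyperbolic equation
`u_{xy} + a u_x + b u_y + c u = 0` which vanishes on the non-characteristic curve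
`Γ = {(x, s(x))}`.  Here `R q P` is the Riemann function `ℜ(q; P)` of `H`. -/
theorem riemann_representation_dirichlet
    (a b c : ℝ × ℝ → ℝ)
    (ha : ContDiff ℝ 1 a) (hb : ContDiff ℝ 1 b) (hc : ContDiff ℝ 1 c)
    (R : ℝ × ℝ → ℝ × ℝ → ℝ)
    (hRsmooth : ∀ P : ℝ × ℝ, ContDiff ℝ 2 (fun q => R q P))
    -- (i) the adjoint equation `H* ℜ = 0` in the variables `q = (x, y)`
    (hRadj : ∀ P q : ℝ × ℝ,
      pdy (pdx (fun q' => R q' P)) q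
        - pdx (fun q' => a q' * R q' P) q
        - pdy (fun q' => b q' * R q' P) q
        + c q * R q P = 0)
    -- (ii) Goursat data on the vertical characteristic `x = x₀`
    (hRvert : ∀ P : ℝ × ℝ, ∀ y : ℝ,
      R (P.1, y) P = Real.exp (∫ τ in P.2..y, a (P.1, τ)))
    -- (iii) Goursat data on the horizontal characteristic `y = y₀`
    (hRhoriz : ∀ P : ℝ × ℝ, ∀ x : ℝ,
      R (x, P.2) P = Real.exp (∫ t in P.1..x, b (t, P.2)))
    (s : ℝ → ℝ) (hs : ContDiff ℝ 1 s) (hsdec : StrictAnti s)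
    (hsbij : Function.Bijective s)
    (u : ℝ × ℝ → ℝ) (hu : ContDiff ℝ 2 u)
    (hueq : ∀ q : ℝ × ℝ,
      pdy (pdx u) q + a q * pdx u q + b q * pdy u q + c q * u q = 0)
    (huΓ : ∀ x : ℝ, u (x, s x) = 0) :
    ∀ x₀ y₀ : ℝ,
      u (x₀, y₀) =
        (1 / 2) * ∫ x in (Function.invFun s y₀)..x₀,
          R (x, s x) (x₀, y₀) * (pdx u (x, s x) - pdy u (x, s x) * deriv s x) := by
  intro x₀ y₀
  have hsx₁ : s (Function.invFun s y₀) = y₀ := Function.rightInverse_invFun hsbij.2 y₀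
  have hvert : ∀ y : ℝ, R (x₀, y) (x₀, y₀) = Real.exp (∫ τ in y₀..y, a (x₀, τ)) :=
    fun y => hRvert (x₀, y₀) y
  have hhoriz : ∀ x : ℝ, R (x, y₀) (x₀, y₀) = Real.exp (∫ t in x₀..x, b (t, y₀)) :=
    fun x => hRhoriz (x₀, y₀) x
  exact RiemannAux.main_aux a b c ha hb (fun q => R q (x₀, y₀)) (hRsmooth (x₀, y₀))
    (hRadj (x₀, y₀)) x₀ y₀ hvert hhoriz s hs (Function.invFun s y₀) hsx₁ u hu hueq huΓ
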